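/- Let V be a positive natural number and P, Q : Fin V → ℝ two probability vectors (nonnegative entries summing to 1). Let A ⊆ Fin V be a set with P(A) > 0 and Q(A) > 0, where P(A) = ∑_{v ∈ A} P(v). Define the restricted (conditional) distributions P|A(v) = P(v)·1_A(v)/P(A) and Q|A(v) = Q(v)·1_A(v)/Q(A). Then TV(P|A, Q|A) ≤ TV(P, Q) / min{P(A), Q(A)}. -/

import Mathlib

open Finset

/-- Total variation distance between two probability vectors on `Fin V`. -/
noncomputable def TV {V : ℕ} (P Q : Fin V → ℝ) : ℝ := (1 / 2) * ∑ v, |P v - Q v|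

/-- The conditional (restricted) distribution of `P` given a set `A`. -/
noncomputable def condDist {V : ℕ} (P : Fin V → ℝ) (A : Finset (Fin V)) : Fin V → ℝ :=
  fun v => P v * (if v ∈ A then 1 else 0) / ∑ u ∈ A, P u

/-- TV between conditional distributions is controlled by the unconditional TV
divided by the smaller of the two restriction masses. -/
theorem tv_condDist_le (V : ℕ) (hV : 0 < V) (P Q : Fin V → ℝ)
    (hP0 : ∀ v, 0 ≤ P v) (hP1 : ∑ v, P v = 1)
    (hQ0 : ∀ v, 0 ≤ Q v) (hQ1 : ∑ v, Q v = 1)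
    (A : Finset (Fin V)) (hPA : 0 < ∑ v ∈ A, P v) (hQA : 0 < ∑ v ∈ A, Q v) :
    TV (condDist P A) (condDist Q A) ≤
      TV P Q / min (∑ v ∈ A, P v) (∑ v ∈ A, Q v) := by
  set a := ∑ v ∈ A, P v with ha
  set b := ∑ v ∈ A, Q v with hb
  have hTV0 : 0 ≤ TV P Q := by
    unfold TV
    positivity
  -- restrict sum to A
  have hsum : ∑ v, |condDist P A v - condDist Q A v|
      = ∑ v ∈ A, |condDist P A v - condDist Q A v| := by
    symm
    apply Finset.sum_subset (Finset.subset_univ A)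
    intro v _ hv
    simp [condDist, if_neg hv]
  -- pointwise bound on A
  have habs : ∀ v ∈ A, |condDist P A v - condDist Q A v|
      ≤ |P v - Q v| / a + Q v * |b - a| / (a * b) := by
    intro v hv
    simp only [condDist, if_pos hv, mul_one]
    have h1 : P v / a - Q v / b = (P v - Q v) / a + Q v * (b - a) / (a * b) := by
      field_simp
      ring
    rw [h1]
    calc |(P v - Q v) / a + Q v * (b - a) / (a * b)|
        ≤ |(P v - Q v) / a| + |Q v * (b - a) / (a * b)| := abs_add_le _ _
      _ = |P v - Q v| / a + Q v * |b - a| / (a * b) := by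
          rw [abs_div, abs_div, abs_mul, abs_of_pos hPA, abs_of_pos (mul_pos hPA hQA),
            abs_of_nonneg (hQ0 v)]
  -- |b - a| ≤ sum over complement
  have hBA : |b - a| ≤ ∑ v ∈ Aᶜ, |P v - Q v| := by
    have h1 : b - a = ∑ v ∈ Aᶜ, (P v - Q v) := by
      have hP : a + ∑ v ∈ Aᶜ, P v = 1 := by rw [ha, Finset.sum_add_sum_compl, hP1]
      have hQ : b + ∑ v ∈ Aᶜ, Q v = 1 := by rw [hb, Finset.sum_add_sum_compl, hQ1]
      rw [Finset.sum_sub_distrib]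
      linarith
    rw [h1]
    exact Finset.abs_sum_le_sum_abs _ _
  have hsplit : ∑ v ∈ A, |P v - Q v| + ∑ v ∈ Aᶜ, |P v - Q v| = ∑ v, |P v - Q v| :=
    Finset.sum_add_sum_compl A _
  have key : TV (condDist P A) (condDist Q A) ≤ TV P Q / a := by
    unfold TV
    rw [hsum, mul_div_assoc]
    apply mul_le_mul_of_nonneg_left _ (by norm_num : (0:ℝ) ≤ 1/2)
    calc ∑ v ∈ A, |condDist P A v - condDist Q A v|
        ≤ ∑ v ∈ A, (|P v - Q v| / a + Q v * |b - a| / (a * b)) :=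
          Finset.sum_le_sum habs
      _ = (∑ v ∈ A, |P v - Q v|) / a + |b - a| / a := by
          rw [Finset.sum_add_distrib, ← Finset.sum_div]
          congr 1
          rw [← Finset.sum_div, ← Finset.sum_mul, ← hb]
          rw [div_eq_div_iff (mul_pos hPA hQA).ne' hPA.ne']
          ring
      _ ≤ (∑ v ∈ A, |P v - Q v|) / a + (∑ v ∈ Aᶜ, |P v - Q v|) / a := by
          gcongr
      _ = (∑ v, |P v - Q v|) / a := by rw [← add_div, hsplit]
  calc TV (condDist P A) (condDist Q A) ≤ TV P Q / a := key
    _ ≤ TV P Q / min a b := by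
        apply div_le_div_of_nonneg_left hTV0 (lt_min hPA hQA) (min_le_left _ _)
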